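/- For any two finite simple graphs G and H, the Shannon capacity of their disjoint union equals the sum of their capacities if and only if the Shannon capacity of their strong product equals the product of their capacities. -/

import Mathlib

namespace Paper

def strongProd {V W : Type*} (G : SimpleGraph V) (H : SimpleGraph W) : SimpleGraph (V × W) :=
  SimpleGraph.fromRel (fun x y =>
    (x.1 = y.1 ∨ G.Adj x.1 y.1) ∧ (x.2 = y.2 ∨ H.Adj x.2 y.2))

def strongPow {V : Type*} (G : SimpleGraph V) (k : ℕ) : SimpleGraph (Fin k → V) :=
  SimpleGraph.fromRel (fun x y => ∀ i, x i = y i ∨ G.Adj (x i) (y i))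

noncomputable def indepNum {V : Type*} [Fintype V] (G : SimpleGraph V) : ℕ :=
  sSup {n | ∃ s : Finset V, (∀ a ∈ s, ∀ b ∈ s, a ≠ b → ¬ G.Adj a b) ∧ s.card = n}

noncomputable def shannonCapacity {V : Type*} [Fintype V] (G : SimpleGraph V) : ℝ :=
  ⨆ k : ℕ, (indepNum (strongPow G (k + 1)) : ℝ) ^ ((1 : ℝ) / (k + 1))

noncomputable def lovaszTheta {V : Type*} [Fintype V] (G : SimpleGraph V) : ℝ :=
  sSup {x : ℝ | ∃ B : Matrix V V ℝ, B.PosSemidef ∧ B.trace = 1 ∧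
    (∀ i j, G.Adj i j → B i j = 0) ∧ x = ∑ i, ∑ j, B i j}

noncomputable def fracIndepNum {V : Type*} [Fintype V] (G : SimpleGraph V) : ℝ :=
  sSup {x : ℝ | ∃ f : V → ℝ, (∀ v, 0 ≤ f v) ∧
    (∀ s : Finset V, G.IsClique (s : Set V) → ∑ v ∈ s, f v ≤ 1) ∧ x = ∑ v, f v}

def Universal {V : Type*} [Fintype V] (G : SimpleGraph V) : Prop :=
  ∀ (W : Type) [Fintype W] (H : SimpleGraph W),
    indepNum (strongProd G H) = indepNum G * indepNum H

def sigmaUnion {ι : Type*} {V : ι → Type*} (G : ∀ i, SimpleGraph (V i)) :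
    SimpleGraph (Σ i, V i) :=
  SimpleGraph.fromRel (fun x y =>
    ∃ i, ∃ a b : V i, (G i).Adj a b ∧ x = ⟨i, a⟩ ∧ y = ⟨i, b⟩)

def piStrongProd {ι : Type*} {V : ι → Type*} (G : ∀ i, SimpleGraph (V i)) :
    SimpleGraph (∀ i, V i) :=
  SimpleGraph.fromRel (fun x y => ∀ i, x i = y i ∨ (G i).Adj (x i) (y i))

def tadpole (k l : ℕ) : SimpleGraph (Fin (k + l)) :=
  SimpleGraph.fromRel (fun x y =>
    ((x : ℕ) < k ∧ (y : ℕ) < k ∧ ((x : ℕ) + 1) % k = (y : ℕ)) ∨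
    (k ≤ (x : ℕ) ∧ (y : ℕ) = (x : ℕ) + 1) ∨
    ((x : ℕ) = 0 ∧ (y : ℕ) = k))

set_option linter.unusedSectionVars false
set_option linter.unusedVariables false
set_option maxHeartbeats 1000000

set_option maxHeartbeats 1000000

open Finset

section RelCore

variable {V W V' W' : Type*}

/-- Product relation. -/
def pRel (r : V → V → Prop) (s : W → W → Prop) : V × W → V × W → Prop :=
  fun x y => r x.1 y.1 ∧ s x.2 y.2

/-- Power relation over an index type. -/
def piR (ι : Type*) (r : V → V → Prop) : (ι → V) → (ι → V) → Prop :=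
  fun x y => ∀ i, r (x i) (y i)

/-- Independence number of a relation. -/
noncomputable def aR {V : Type*} [Fintype V] (r : V → V → Prop) : ℕ :=
  sSup {n | ∃ s : Finset V, (∀ a ∈ s, ∀ b ∈ s, a ≠ b → ¬ r a b) ∧ s.card = n}

def IndepF (r : V → V → Prop) (s : Finset V) : Prop :=
  ∀ a ∈ s, ∀ b ∈ s, a ≠ b → ¬ r a b

variable [Fintype V] [Fintype W] [Fintype V'] [Fintype W']
variable {r : V → V → Prop} {s : W → W → Prop} {r' : V' → V' → Prop} {s' : W' → W' → Prop}

lemma aR_set_nonempty (r : V → V → Prop) :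
    {n | ∃ s : Finset V, IndepF r s ∧ s.card = n}.Nonempty :=
  ⟨0, ∅, fun a ha => absurd ha (Finset.notMem_empty a), rfl⟩

lemma aR_set_bdd (r : V → V → Prop) :
    BddAbove {n | ∃ s : Finset V, IndepF r s ∧ s.card = n} := by
  refine ⟨Fintype.card V, fun n hn => ?_⟩
  obtain ⟨s, -, rfl⟩ := hn
  exact s.card_le_univ.trans_eq (Finset.card_univ)

lemma card_le_aR {s : Finset V} (h : IndepF r s) : s.card ≤ aR r :=
  le_csSup (aR_set_bdd r) ⟨s, h, rfl⟩

lemma exists_aR (r : V → V → Prop) : ∃ s : Finset V, IndepF r s ∧ s.card = aR r :=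
  Nat.sSup_mem (aR_set_nonempty r) (aR_set_bdd r)

lemma aR_le {n : ℕ} (h : ∀ s : Finset V, IndepF r s → s.card ≤ n) : aR r ≤ n :=
  csSup_le (aR_set_nonempty r) (fun m hm => by obtain ⟨s, hs, rfl⟩ := hm; exact h s hs)

lemma one_le_aR [Nonempty V] (r : V → V → Prop) : 1 ≤ aR r := by
  have h : IndepF r {Classical.arbitrary V} := by
    intro a ha b hb hab
    simp only [Finset.mem_singleton] at ha hb
    exact absurd (ha.trans hb.symm) hab
  simpa using card_le_aR h

lemma aR_le_card (r : V → V → Prop) : aR r ≤ Fintype.card V :=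
  aR_le fun s _ => s.card_le_univ.trans_eq Finset.card_univ

lemma aR_le_of_map (f : V → V') (hf : Function.Injective f)
    (h : ∀ a b : V, a ≠ b → r' (f a) (f b) → r a b) : aR r ≤ aR r' := by
  classical
  obtain ⟨s, hs, hc⟩ := exists_aR r
  rw [← hc, ← Finset.card_image_of_injective s hf]
  refine card_le_aR ?_
  intro a' ha' b' hb' hab' hr'
  obtain ⟨a, ha, rfl⟩ := Finset.mem_image.1 ha'
  obtain ⟨b, hb, rfl⟩ := Finset.mem_image.1 hb'
  have hab : a ≠ b := fun e => hab' (by rw [e])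
  exact hs a ha b hb hab (h a b hab hr')

lemma aR_iso (e : V ≃ V') (h : ∀ a b : V, a ≠ b → (r a b ↔ r' (e a) (e b))) :
    aR r = aR r' := by
  refine le_antisymm (aR_le_of_map e e.injective fun a b hab h' => (h a b hab).2 h')
    (aR_le_of_map e.symm e.symm.injective fun a b hab h' => ?_)
  have hab' : e.symm a ≠ e.symm b := fun hh => hab (e.symm.injective hh)
  have := (h (e.symm a) (e.symm b) hab').1
  simp only [Equiv.apply_symm_apply] at this
  exact this h'

lemma aR_iso' (e : V ≃ V') (h : ∀ a b : V, r a b ↔ r' (e a) (e b)) : aR r = aR r' :=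
  aR_iso e (fun a b _ => h a b)

lemma aR_congr {r₁ r₂ : V → V → Prop} (h : ∀ a b, a ≠ b → (r₁ a b ↔ r₂ a b)) :
    aR r₁ = aR r₂ :=
  aR_iso (Equiv.refl V) h

lemma aR_congr' {r₁ r₂ : V → V → Prop} (h : ∀ a b, r₁ a b ↔ r₂ a b) : aR r₁ = aR r₂ :=
  aR_iso' (Equiv.refl V) h

lemma aR_mul_le (r : V → V → Prop) (s : W → W → Prop) :
    aR r * aR s ≤ aR (pRel r s) := by
  obtain ⟨t, ht, htc⟩ := exists_aR r
  obtain ⟨u, hu, huc⟩ := exists_aR s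
  rw [← htc, ← huc, ← Finset.card_product]
  refine card_le_aR ?_
  rintro ⟨a1, a2⟩ ha ⟨b1, b2⟩ hb hab ⟨h1, h2⟩
  rw [Finset.mem_product] at ha hb
  by_cases h12 : a1 = b1
  · subst h12
    exact hu a2 ha.2 b2 hb.2 (fun e => hab (by rw [e])) h2
  · exact ht a1 ha.1 b1 hb.1 h12 h1

end RelCore



section IsoLemmas

variable {V W V' W' : Type*} [Fintype V] [Fintype W] [Fintype V'] [Fintype W']
variable {r : V → V → Prop} {s : W → W → Prop} {r' : V' → V' → Prop} {s' : W' → W' → Prop}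

lemma aR_index_congr {ι ι' : Type*} [Fintype ι] [Fintype ι'] [DecidableEq ι] [DecidableEq ι']
    (σ : ι ≃ ι') (r : V → V → Prop) : aR (piR ι r) = aR (piR ι' r) := by
  refine aR_iso' (Equiv.arrowCongr σ (Equiv.refl V)) fun a b => ?_
  simp only [piR, Equiv.arrowCongr_apply, Equiv.refl_symm, Equiv.coe_refl, Function.comp]
  constructor
  · intro h i'; exact h (σ.symm i')
  · intro h i; simpa using h (σ i)

lemma aR_pi_sum {ι ι' : Type*} [Fintype ι] [Fintype ι'] [DecidableEq ι] [DecidableEq ι']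
    (r : V → V → Prop) :
    aR (piR (ι ⊕ ι') r) = aR (pRel (piR ι r) (piR ι' r)) := by
  refine aR_iso' (Equiv.sumArrowEquivProdArrow ι ι' V) fun a b => ?_
  simp only [piR, pRel, Equiv.sumArrowEquivProdArrow]
  constructor
  · intro h; exact ⟨fun i => h (Sum.inl i), fun i => h (Sum.inr i)⟩
  · rintro ⟨h1, h2⟩ (i | i)
    · exact h1 i
    · exact h2 i

lemma aR_pi_prod {ι : Type*} [Fintype ι] [DecidableEq ι] (r : V → V → Prop) (s : W → W → Prop) :
    aR (piR ι (pRel r s)) = aR (pRel (piR ι r) (piR ι s)) := by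
  refine aR_iso' (Equiv.arrowProdEquivProdArrow ι (fun _ => V) (fun _ => W)) fun a b => ?_
  simp only [piR, pRel, Equiv.arrowProdEquivProdArrow, Equiv.coe_fn_mk]
  exact ⟨fun h => ⟨fun i => (h i).1, fun i => (h i).2⟩, fun h i => ⟨h.1 i, h.2 i⟩⟩

lemma aR_pi_one (r : V → V → Prop) : aR (piR (Fin 1) r) = aR r := by
  refine aR_iso' (Equiv.funUnique (Fin 1) V) fun a b => ?_
  simp only [piR, Equiv.funUnique, Equiv.piUnique, Equiv.coe_fn_mk]
  exact ⟨fun h => h default, fun h i => by rwa [Subsingleton.elim i default]⟩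

lemma aR_pi_zero [Nonempty V] (r : V → V → Prop) : aR (piR (Fin 0) r) = 1 := by
  refine le_antisymm (aR_le fun t _ => Finset.card_le_one.2 fun a _ b _ => ?_) (one_le_aR _)
  exact funext fun i => i.elim0

lemma aR_pRel_iso (e₁ : V ≃ V') (e₂ : W ≃ W')
    (h₁ : ∀ a b : V, r a b ↔ r' (e₁ a) (e₁ b)) (h₂ : ∀ a b : W, s a b ↔ s' (e₂ a) (e₂ b)) :
    aR (pRel r s) = aR (pRel r' s') := by
  refine aR_iso' (e₁.prodCongr e₂) fun a b => ?_
  simp only [pRel, Equiv.prodCongr_apply, Prod.map]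
  rw [← h₁, ← h₂]

lemma aR_pRel_comm (r : V → V → Prop) (s : W → W → Prop) :
    aR (pRel r s) = aR (pRel s r) := by
  refine aR_iso' (Equiv.prodComm V W) fun a b => ?_
  simp only [pRel, Equiv.prodComm_apply, Prod.fst_swap, Prod.snd_swap]
  exact and_comm

lemma aR_prodProdProdComm (r₁ : V → V → Prop) (s₁ : W → W → Prop)
    (r₂ : V' → V' → Prop) (s₂ : W' → W' → Prop) :
    aR (pRel (pRel r₁ s₁) (pRel r₂ s₂)) = aR (pRel (pRel r₁ r₂) (pRel s₁ s₂)) := by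
  refine aR_iso' (Equiv.prodProdProdComm V W V' W') fun a b => ?_
  simp only [pRel, Equiv.prodProdProdComm, Equiv.coe_fn_mk]
  tauto

/-- Concatenation equivalence for Fin powers. -/
def finConcatEquiv (p p' : ℕ) (V : Type*) : ((Fin p → V) × (Fin p' → V)) ≃ (Fin (p + p') → V) :=
  (Equiv.sumArrowEquivProdArrow (Fin p) (Fin p') V).symm.trans
    (Equiv.arrowCongr finSumFinEquiv (Equiv.refl V))

lemma finConcat_iff {p p' : ℕ} (r : V → V → Prop) (a b : (Fin p → V) × (Fin p' → V)) :
    pRel (piR (Fin p) r) (piR (Fin p') r) a b ↔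
      piR (Fin (p + p')) r (finConcatEquiv p p' V a) (finConcatEquiv p p' V b) := by
  show (∀ i, r (a.1 i) (b.1 i)) ∧ (∀ i, r (a.2 i) (b.2 i)) ↔
    ∀ j, r (Sum.elim a.1 a.2 (finSumFinEquiv.symm j)) (Sum.elim b.1 b.2 (finSumFinEquiv.symm j))
  constructor
  · intro h j
    rcases hi : finSumFinEquiv.symm j with i | i <;> simp only [Sum.elim_inl, Sum.elim_inr]
    · exact h.1 i
    · exact h.2 i
  · intro h
    constructor
    · intro i
      have := h (finSumFinEquiv (Sum.inl i))
      rwa [Equiv.symm_apply_apply] at this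
    · intro i
      have := h (finSumFinEquiv (Sum.inr i))
      rwa [Equiv.symm_apply_apply] at this

/-- Concatenation of Fin powers. -/
lemma aR_fin_concat (p p' : ℕ) (r : V → V → Prop) :
    aR (pRel (piR (Fin p) r) (piR (Fin p') r)) = aR (piR (Fin (p + p')) r) :=
  aR_iso' (finConcatEquiv p p' V) (finConcat_iff r)

lemma aR_pRel_unique_right [Nonempty W] (r : V → V → Prop) (s : W → W → Prop) :
    aR (pRel r (piR (Fin 0) s)) = aR r := by
  refine aR_iso' (Equiv.prodUnique V (Fin 0 → W)) fun a b => ?_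
  constructor
  · intro h; exact h.1
  · intro h; exact ⟨h, fun i => i.elim0⟩

lemma aR_pRel_unique_left [Nonempty V] (r : V → V → Prop) (s : W → W → Prop) :
    aR (pRel (piR (Fin 0) r) s) = aR s := by
  rw [aR_pRel_comm]; exact aR_pRel_unique_right s r

/-- The key concatenation inequality (C11). -/
lemma aR_concat2 (p q p' q' : ℕ) (r : V → V → Prop) (s : W → W → Prop) :
    aR (pRel (piR (Fin p) r) (piR (Fin q) s)) * aR (pRel (piR (Fin p') r) (piR (Fin q') s))
      ≤ aR (pRel (piR (Fin (p + p')) r) (piR (Fin (q + q')) s)) := by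
  refine (aR_mul_le _ _).trans ?_
  rw [aR_prodProdProdComm]
  rw [aR_pRel_iso (finConcatEquiv p p' V) (finConcatEquiv q q' W)
    (finConcat_iff r) (finConcat_iff s)]

end IsoLemmas



section NSup

open Real

/-- Normalized supremum of a sequence. -/
noncomputable def nsup (u : ℕ → ℝ) : ℝ := ⨆ k : ℕ, (u (k + 1)) ^ ((1 : ℝ) / (k + 1))

/-- A "good" sequence: at least 1, at most `K ^ n`, supermultiplicative. -/
structure GoodSeq (u : ℕ → ℝ) (K : ℝ) : Prop where
  one_le : ∀ n, 1 ≤ u n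
  le_pow : ∀ n, u n ≤ K ^ n
  supmul : ∀ m n, u m * u n ≤ u (m + n)

namespace GoodSeq

variable {u v w : ℕ → ℝ} {K K' K'' : ℝ}

lemma nonneg (hu : GoodSeq u K) (n : ℕ) : 0 ≤ u n := zero_le_one.trans (hu.one_le n)

lemma one_le_K (hu : GoodSeq u K) : 1 ≤ K := by
  have h := (hu.one_le 1).trans (hu.le_pow 1)
  rwa [pow_one] at h

lemma K_nonneg (hu : GoodSeq u K) : 0 ≤ K := zero_le_one.trans hu.one_le_K

lemma scale (hu : GoodSeq u K) (a : ℕ) : GoodSeq (fun n => u (a * n)) (K ^ a) := by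
  refine ⟨fun n => hu.one_le _, fun n => ?_, fun m n => ?_⟩
  · rw [← pow_mul]; exact hu.le_pow _
  · rw [mul_add]
    exact hu.supmul _ _

/-- Casting helper: `u n ^ k ≤ u (n * k)`. -/
lemma pow_le (hu : GoodSeq u K) (n k : ℕ) : u n ^ k ≤ u (n * k) := by
  induction k with
  | zero => simpa using hu.one_le 0
  | succ k ih =>
      calc u n ^ (k + 1) = u n ^ k * u n := by ring
      _ ≤ u (n * k) * u n := by
          exact mul_le_mul_of_nonneg_right ih (hu.nonneg n)
      _ ≤ u (n * k + n) := hu.supmul _ _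
      _ = u (n * (k + 1)) := by ring_nf

lemma term_nonneg (hu : GoodSeq u K) (k : ℕ) : 0 ≤ u (k + 1) ^ ((1 : ℝ) / (k + 1)) :=
  Real.rpow_nonneg (hu.nonneg _) _

lemma term_le_K (hu : GoodSeq u K) (n : ℕ) (hn : 1 ≤ n) : u n ^ ((1 : ℝ) / n) ≤ K := by
  have hn0 : (n : ℝ) ≠ 0 := Nat.cast_ne_zero.2 (by omega)
  have h1 : u n ^ ((1 : ℝ) / n) ≤ (K ^ n) ^ ((1 : ℝ) / n) :=
    Real.rpow_le_rpow (hu.nonneg n) (hu.le_pow n) (by positivity)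
  calc u n ^ ((1 : ℝ) / n) ≤ (K ^ n) ^ ((1 : ℝ) / n) := h1
  _ = K := by
      rw [← Real.rpow_natCast K n, ← Real.rpow_mul hu.K_nonneg, mul_one_div_cancel hn0,
        Real.rpow_one]

lemma bdd (hu : GoodSeq u K) :
    BddAbove (Set.range fun k : ℕ => u (k + 1) ^ ((1 : ℝ) / (k + 1))) := by
  refine ⟨K, fun x hx => ?_⟩
  obtain ⟨k, rfl⟩ := hx
  have := hu.term_le_K (k + 1) (by omega)
  rwa [Nat.cast_add, Nat.cast_one] at this

lemma le_nsup (hu : GoodSeq u K) (n : ℕ) (hn : 1 ≤ n) : u n ^ ((1 : ℝ) / n) ≤ nsup u := by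
  obtain ⟨k, rfl⟩ : ∃ k, n = k + 1 := ⟨n - 1, by omega⟩
  have h := le_ciSup hu.bdd k
  push_cast at h ⊢
  exact h

lemma one_le_nsup (hu : GoodSeq u K) : 1 ≤ nsup u := by
  have h := hu.le_nsup 1 le_rfl
  norm_num at h
  exact (hu.one_le 1).trans h

lemma nsup_nonneg (hu : GoodSeq u K) : 0 ≤ nsup u := zero_le_one.trans hu.one_le_nsup

lemma nsup_le (hu : GoodSeq u K) {C : ℝ} (hC : 0 ≤ C) (h : ∀ n, 1 ≤ n → u n ≤ C ^ n) :
    nsup u ≤ C := by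
  refine ciSup_le fun k => ?_
  have hn0 : ((k : ℝ) + 1) ≠ 0 := by positivity
  calc u (k + 1) ^ ((1 : ℝ) / (k + 1)) ≤ (C ^ (k + 1)) ^ ((1 : ℝ) / (k + 1)) :=
      Real.rpow_le_rpow (hu.nonneg _) (by exact_mod_cast h (k + 1) (by omega)) (by positivity)
  _ = C := by
      rw [← Real.rpow_natCast C (k + 1), ← Real.rpow_mul hC]
      push_cast
      rw [mul_one_div_cancel hn0, Real.rpow_one]

lemma nsup_le_K (hu : GoodSeq u K) : nsup u ≤ K := hu.nsup_le hu.K_nonneg fun n _ => hu.le_pow n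

lemma upow_le_nsup (hu : GoodSeq u K) (n : ℕ) (hn : 1 ≤ n) : u n ≤ nsup u ^ n := by
  have h := hu.le_nsup n hn
  have hn0 : (n : ℝ) ≠ 0 := Nat.cast_ne_zero.2 (by omega)
  calc u n = (u n ^ ((1 : ℝ) / n)) ^ n := by
        rw [← Real.rpow_natCast (u n ^ ((1:ℝ)/n)) n, ← Real.rpow_mul (hu.nonneg n),
          one_div_mul_cancel hn0, Real.rpow_one]
  _ ≤ nsup u ^ n := pow_le_pow_left₀ (Real.rpow_nonneg (hu.nonneg n) _) h n

/-- Multiples trick: term at `n` is below term at `n * k`. -/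
lemma term_le_term_mul (hu : GoodSeq u K) (n k : ℕ) (hn : 1 ≤ n) (hk : 1 ≤ k) :
    u n ^ ((1 : ℝ) / n) ≤ u (n * k) ^ ((1 : ℝ) / (n * k)) := by
  have hn0 : (n : ℝ) ≠ 0 := Nat.cast_ne_zero.2 (by omega)
  have hk0 : (k : ℝ) ≠ 0 := Nat.cast_ne_zero.2 (by omega)
  have hek : (0:ℝ) ≤ 1 / ((n:ℝ) * (k:ℝ)) := by positivity
  have h1 : u n ^ k ≤ u (n * k) := hu.pow_le n k
  have h2 : (u n ^ k) ^ ((1 : ℝ) / ((n:ℝ) * (k:ℝ))) ≤ u (n * k) ^ ((1 : ℝ) / ((n:ℝ) * (k:ℝ))) :=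
    Real.rpow_le_rpow (pow_nonneg (hu.nonneg n) k) h1 hek
  have h3 : (u n ^ k) ^ ((1 : ℝ) / ((n:ℝ) * (k:ℝ))) = u n ^ ((1 : ℝ) / n) := by
    rw [← Real.rpow_natCast (u n) k, ← Real.rpow_mul (hu.nonneg n)]
    congr 1
    field_simp
  rw [← h3]
  exact h2

/-- Product of normalized sups. -/
lemma nsup_mul_nsup_le (hu : GoodSeq u K) (hv : GoodSeq v K') (hw : GoodSeq w K'')
    (hc : ∀ n, 1 ≤ n → u n * v n ≤ w n) : nsup u * nsup v ≤ nsup w := by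
  have key : ∀ j k : ℕ, 1 ≤ j → 1 ≤ k →
      u j ^ ((1 : ℝ) / j) * v k ^ ((1 : ℝ) / k) ≤ nsup w := by
    intro j k hj hk
    have hjk : 1 ≤ j * k := Nat.one_le_iff_ne_zero.2 (Nat.mul_ne_zero (by omega) (by omega))
    have h1 : u j ^ ((1 : ℝ) / j) ≤ u (j * k) ^ ((1 : ℝ) / (j * k)) :=
      hu.term_le_term_mul j k hj hk
    have h2 : v k ^ ((1 : ℝ) / k) ≤ v (j * k) ^ ((1 : ℝ) / ((j : ℝ) * k)) := by
      have t := hv.term_le_term_mul k j hk hj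
      rw [mul_comm k j] at t
      rwa [mul_comm (k : ℝ) (j : ℝ)] at t
    have h4 : w (j * k) ^ ((1 : ℝ) / ((j : ℝ) * k)) ≤ nsup w := by
      have t := hw.le_nsup (j * k) hjk
      push_cast at t
      exact t
    calc u j ^ ((1 : ℝ) / j) * v k ^ ((1 : ℝ) / k)
        ≤ u (j * k) ^ ((1 : ℝ) / ((j : ℝ) * k)) * v (j * k) ^ ((1 : ℝ) / ((j : ℝ) * k)) :=
          mul_le_mul h1 h2 (Real.rpow_nonneg (hv.nonneg k) _)
            (Real.rpow_nonneg (hu.nonneg _) _)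
    _ = (u (j * k) * v (j * k)) ^ ((1 : ℝ) / ((j : ℝ) * k)) :=
        (Real.mul_rpow (hu.nonneg _) (hv.nonneg _)).symm
    _ ≤ w (j * k) ^ ((1 : ℝ) / ((j : ℝ) * k)) :=
        Real.rpow_le_rpow (mul_nonneg (hu.nonneg _) (hv.nonneg _)) (hc (j * k) hjk)
          (by positivity)
    _ ≤ nsup w := h4
  have hT : 0 ≤ nsup w := hw.nsup_nonneg
  have step : ∀ k : ℕ, nsup u * v (k + 1) ^ ((1 : ℝ) / (k + 1)) ≤ nsup w := by
    intro k
    have hpos : (0 : ℝ) < v (k + 1) ^ ((1 : ℝ) / (k + 1)) := by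
      have h01 : (1:ℝ) ≤ v (k+1) ^ ((1:ℝ)/((k:ℝ)+1)) :=
        Real.one_le_rpow (hv.one_le (k+1)) (by positivity)
      linarith
    rw [← le_div_iff₀ hpos]
    refine ciSup_le fun j => ?_
    rw [le_div_iff₀ hpos]
    have t := key (j + 1) (k + 1) (by omega) (by omega)
    push_cast at t ⊢
    exact t
  rcases le_or_gt (nsup u) 0 with h0 | h0
  · have h00 : nsup u = 0 := le_antisymm h0 hu.nsup_nonneg
    rw [h00, zero_mul]; exact hT
  · rw [mul_comm, ← le_div_iff₀ h0]
    refine ciSup_le fun k => ?_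
    rw [le_div_iff₀ h0, mul_comm]
    exact step k

/-- Scaling: `nsup (u (a * ·)) = (nsup u) ^ a` for `a ≥ 1`. -/
lemma nsup_scale (hu : GoodSeq u K) (a : ℕ) (ha : 1 ≤ a) :
    nsup (fun n => u (a * n)) = nsup u ^ a := by
  have hsc := hu.scale a
  refine le_antisymm ?_ ?_
  · refine hsc.nsup_le (pow_nonneg hu.nsup_nonneg a) fun n hn => ?_
    rw [← pow_mul]
    exact hu.upow_le_nsup (a * n)
      (Nat.one_le_iff_ne_zero.2 (Nat.mul_ne_zero (by omega) (by omega)))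
  · set T := nsup (fun n => u (a * n)) with hT
    have hT1 : 1 ≤ T := hsc.one_le_nsup
    have hT0 : (0:ℝ) ≤ T := by linarith
    have ha0 : (a : ℝ) ≠ 0 := Nat.cast_ne_zero.2 (by omega)
    have key : ∀ m : ℕ, 1 ≤ m → (u m ^ ((1 : ℝ) / m)) ^ a ≤ T := by
      intro m hm
      have h1 : u m ^ a ≤ u (a * m) := by
        have t := hu.pow_le m a; rwa [mul_comm m a] at t
      have h2 : (u (a * m)) ^ ((1 : ℝ) / m) ≤ T := hsc.le_nsup m hm
      calc (u m ^ ((1 : ℝ) / m)) ^ a = (u m ^ a) ^ ((1 : ℝ) / m) := by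
            rw [← Real.rpow_natCast (u m) a,
              ← Real.rpow_natCast (u m ^ ((1:ℝ)/(m:ℝ))) a,
              ← Real.rpow_mul (hu.nonneg m), ← Real.rpow_mul (hu.nonneg m)]
            ring_nf
      _ ≤ (u (a * m)) ^ ((1 : ℝ) / m) :=
            Real.rpow_le_rpow (pow_nonneg (hu.nonneg m) a) h1 (by positivity)
      _ ≤ T := h2
    have hmain : nsup u ≤ T ^ ((1 : ℝ) / a) := by
      refine ciSup_le fun k => ?_
      have hk : (1:ℕ) ≤ k + 1 := by omega
      have hterm : 0 ≤ u (k+1) ^ ((1:ℝ)/((k:ℝ)+1)) := Real.rpow_nonneg (hu.nonneg _) _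
      have heq : u (k+1) ^ ((1:ℝ)/((k:ℝ)+1)) =
          ((u (k+1) ^ ((1:ℝ)/((k:ℝ)+1))) ^ a) ^ ((1:ℝ)/(a:ℝ)) := by
        rw [← Real.rpow_natCast (u (k+1) ^ ((1:ℝ)/((k:ℝ)+1))) a, ← Real.rpow_mul hterm,
          mul_one_div_cancel ha0, Real.rpow_one]
      rw [heq]
      refine Real.rpow_le_rpow (pow_nonneg hterm a) ?_ (by positivity)
      have h' := key (k + 1) hk
      push_cast at h' ⊢
      exact h'
    calc nsup u ^ a ≤ (T ^ ((1 : ℝ) / a)) ^ a :=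
          pow_le_pow_left₀ hu.nsup_nonneg hmain a
    _ = T := by
        rw [← Real.rpow_natCast (T ^ ((1:ℝ)/(a:ℝ))) a, ← Real.rpow_mul hT0,
          one_div_mul_cancel ha0, Real.rpow_one]

end GoodSeq

end NSup



section RelCap

open Finset

variable {V W : Type*} [Fintype V] [Fintype W]

/-- Sequence of independence numbers of powers. -/
noncomputable def useq (r : V → V → Prop) : ℕ → ℝ := fun n => (aR (piR (Fin n) r) : ℝ)

/-- Capacity of a relation. -/
noncomputable def cRR (r : V → V → Prop) : ℝ := nsup (useq r)

lemma cRR_iso {V' : Type*} [Fintype V'] {r : V → V → Prop} {r' : V' → V' → Prop}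
    (e : V ≃ V') (h : ∀ a b, r a b ↔ r' (e a) (e b)) : cRR r = cRR r' := by
  unfold cRR nsup
  congr 1
  funext k
  have h2 : aR (piR (Fin (k+1)) r) = aR (piR (Fin (k+1)) r') := by
    refine aR_iso' (Equiv.arrowCongr (Equiv.refl (Fin (k+1))) e) fun a b => ?_
    constructor
    · intro hp i
      exact (h (a i) (b i)).1 (hp i)
    · intro hp i
      exact (h (a i) (b i)).2 (hp i)
  unfold useq
  rw [h2]


variable [Nonempty V] [Nonempty W]

lemma goodSeq_useq (r : V → V → Prop) : GoodSeq (useq r) (Fintype.card V) := by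
  refine ⟨fun n => ?_, fun n => ?_, fun m n => ?_⟩ <;> unfold useq
  · exact_mod_cast one_le_aR _
  · have h := aR_le_card (piR (Fin n) r)
    have h2 : Fintype.card (Fin n → V) = Fintype.card V ^ n := by
      rw [Fintype.card_fun, Fintype.card_fin]
    rw [h2] at h
    exact_mod_cast h
  · have h := (aR_mul_le (piR (Fin m) r) (piR (Fin n) r)).trans_eq (aR_fin_concat m n r)
    exact_mod_cast h

lemma one_le_cRR (r : V → V → Prop) : 1 ≤ cRR r := (goodSeq_useq r).one_le_nsup

lemma cRR_nonneg (r : V → V → Prop) : 0 ≤ cRR r := (goodSeq_useq r).nsup_nonneg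

/-- Two-parameter sequence. -/
noncomputable def dseq (r : V → V → Prop) (s : W → W → Prop) (a b : ℕ) : ℕ → ℝ :=
  fun n => (aR (pRel (piR (Fin (a * n)) r) (piR (Fin (b * n)) s)) : ℝ)

/-- Asymptotic mixed quantity. -/
noncomputable def Phi (r : V → V → Prop) (s : W → W → Prop) (a b : ℕ) : ℝ :=
  nsup (dseq r s a b)

lemma goodSeq_dseq (r : V → V → Prop) (s : W → W → Prop) (a b : ℕ) :
    GoodSeq (dseq r s a b) (Fintype.card V ^ a * Fintype.card W ^ b) := by
  refine ⟨fun n => ?_, fun n => ?_, fun m n => ?_⟩ <;> unfold dseq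
  · exact_mod_cast one_le_aR _
  · have h := aR_le_card (pRel (piR (Fin (a * n)) r) (piR (Fin (b * n)) s))
    have h2 : Fintype.card ((Fin (a * n) → V) × (Fin (b * n) → W)) =
        Fintype.card V ^ (a * n) * Fintype.card W ^ (b * n) := by
      rw [Fintype.card_prod, Fintype.card_fun, Fintype.card_fun, Fintype.card_fin,
        Fintype.card_fin]
    rw [h2] at h
    have h3 : ((Fintype.card V ^ (a*n) * Fintype.card W ^ (b*n) : ℕ) : ℝ) =
        ((Fintype.card V : ℝ) ^ a * (Fintype.card W : ℝ) ^ b) ^ n := by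
      push_cast
      rw [mul_pow, ← pow_mul, ← pow_mul]
    calc (aR (pRel (piR (Fin (a * n)) r) (piR (Fin (b * n)) s)) : ℝ)
        ≤ ((Fintype.card V ^ (a*n) * Fintype.card W ^ (b*n) : ℕ) : ℝ) := by
          exact_mod_cast h
    _ = _ := h3
  · have h := (aR_concat2 (a*m) (b*m) (a*n) (b*n) r s)
    rw [show a*m + a*n = a*(m+n) by ring, show b*m + b*n = b*(m+n) by ring] at h
    exact_mod_cast h

lemma dseq_one_one (r : V → V → Prop) (s : W → W → Prop) (n : ℕ) :
    dseq r s 1 1 n = useq (pRel r s) n := by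
  unfold dseq useq
  rw [one_mul, ← aR_pi_prod]

lemma phi_one_one (r : V → V → Prop) (s : W → W → Prop) : Phi r s 1 1 = cRR (pRel r s) := by
  unfold Phi cRR
  congr 1
  exact funext (dseq_one_one r s)

lemma dseq_a_zero (r : V → V → Prop) (s : W → W → Prop) (a n : ℕ) :
    dseq r s a 0 n = useq r (a * n) := by
  unfold dseq useq
  rw [zero_mul, aR_pRel_unique_right]

lemma dseq_zero_b (r : V → V → Prop) (s : W → W → Prop) (b n : ℕ) :
    dseq r s 0 b n = useq s (b * n) := by
  unfold dseq useq
  rw [zero_mul, aR_pRel_unique_left]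

lemma dseq_diag (r : V → V → Prop) (s : W → W → Prop) (a n : ℕ) :
    dseq r s a a n = useq (pRel r s) (a * n) := by
  unfold dseq useq
  rw [← aR_pi_prod]

lemma phi_a_zero (r : V → V → Prop) (s : W → W → Prop) (a : ℕ) (ha : 1 ≤ a) :
    Phi r s a 0 = cRR r ^ a := by
  unfold Phi cRR
  rw [show dseq r s a 0 = fun n => useq r (a * n) from funext (dseq_a_zero r s a)]
  exact (goodSeq_useq r).nsup_scale a ha

lemma phi_zero_b (r : V → V → Prop) (s : W → W → Prop) (b : ℕ) (hb : 1 ≤ b) :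
    Phi r s 0 b = cRR s ^ b := by
  unfold Phi cRR
  rw [show dseq r s 0 b = fun n => useq s (b * n) from funext (dseq_zero_b r s b)]
  exact (goodSeq_useq s).nsup_scale b hb

lemma phi_diag (r : V → V → Prop) (s : W → W → Prop) (a : ℕ) (ha : 1 ≤ a) :
    Phi r s a a = cRR (pRel r s) ^ a := by
  unfold Phi cRR
  rw [show dseq r s a a = fun n => useq (pRel r s) (a * n) from funext (dseq_diag r s a)]
  exact (goodSeq_useq (pRel r s)).nsup_scale a ha

lemma phi_zero_zero (r : V → V → Prop) (s : W → W → Prop) : Phi r s 0 0 = 1 := by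
  unfold Phi
  have h : dseq r s 0 0 = fun _ => (1 : ℝ) := by
    funext n
    unfold dseq
    rw [zero_mul, aR_pRel_unique_right, aR_pi_zero]
    norm_num
  rw [h]
  unfold nsup
  have : ∀ k : ℕ, (1 : ℝ) ^ ((1:ℝ)/(k+1)) = 1 := fun k => Real.one_rpow _
  simp only [this, ciSup_const]

lemma phi_mul (r : V → V → Prop) (s : W → W → Prop) (a b a' b' : ℕ) :
    Phi r s a b * Phi r s a' b' ≤ Phi r s (a + a') (b + b') := by
  refine GoodSeq.nsup_mul_nsup_le (goodSeq_dseq r s a b) (goodSeq_dseq r s a' b')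
    (goodSeq_dseq r s (a+a') (b+b')) fun n hn => ?_
  have h := aR_concat2 (a*n) (b*n) (a'*n) (b'*n) r s
  rw [show a*n + a'*n = (a+a')*n by ring, show b*n + b'*n = (b+b')*n by ring] at h
  unfold dseq
  exact_mod_cast h

lemma one_le_phi (r : V → V → Prop) (s : W → W → Prop) (a b : ℕ) : 1 ≤ Phi r s a b :=
  (goodSeq_dseq r s a b).one_le_nsup

lemma phi_lower (r : V → V → Prop) (s : W → W → Prop) (a b : ℕ) :
    cRR r ^ a * cRR s ^ b ≤ Phi r s a b := by
  rcases Nat.eq_zero_or_pos a with rfl | ha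
  · rcases Nat.eq_zero_or_pos b with rfl | hb
    · rw [phi_zero_zero]; norm_num
    · rw [pow_zero, one_mul, ← phi_zero_b r s b hb]
  · rcases Nat.eq_zero_or_pos b with rfl | hb
    · rw [pow_zero, mul_one, ← phi_a_zero r s a ha]
    · calc cRR r ^ a * cRR s ^ b = Phi r s a 0 * Phi r s 0 b := by
            rw [phi_a_zero r s a ha, phi_zero_b r s b hb]
      _ ≤ Phi r s (a + 0) (0 + b) := phi_mul r s a 0 0 b
      _ = Phi r s a b := by rw [add_zero, zero_add]

lemma phi_term (r : V → V → Prop) (s : W → W → Prop) (a b : ℕ) :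
    (aR (pRel (piR (Fin a) r) (piR (Fin b) s)) : ℝ) ≤ Phi r s a b := by
  have h := (goodSeq_dseq r s a b).upow_le_nsup 1 le_rfl
  rw [pow_one] at h
  unfold dseq at h
  rw [mul_one, mul_one] at h
  exact h

lemma cRR_mul_le (r : V → V → Prop) (s : W → W → Prop) :
    cRR r * cRR s ≤ cRR (pRel r s) := by
  have h := phi_lower r s 1 1
  rw [pow_one, pow_one, phi_one_one] at h
  exact h

lemma cRR_pRel_self_le_sq (r : V → V → Prop) : cRR (pRel r r) ≤ cRR r ^ 2 := by
  refine (goodSeq_useq (pRel r r)).nsup_le (pow_nonneg (cRR_nonneg r) 2) fun n hn => ?_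
  have h1 : useq (pRel r r) n = useq r (2 * n) := by
    unfold useq
    rw [aR_pi_prod, aR_fin_concat, two_mul]
  rw [h1, ← pow_mul]
  exact (goodSeq_useq r).upow_le_nsup (2 * n) (by omega)

end RelCap



section PatternLemmas

open Finset

variable {V W : Type*} [Fintype V] [Fintype W] [Nonempty V] [Nonempty W]
variable (r : V → V → Prop) (s : W → W → Prop)

/-- Pattern of a function into a sum type. -/
def patt {m : ℕ} (f : Fin m → V ⊕ W) : Finset (Fin m) :=
  Finset.univ.filter (fun j => (f j).isLeft)

lemma mem_patt {m : ℕ} (f : Fin m → V ⊕ W) (j : Fin m) :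
    j ∈ patt f ↔ (f j).isLeft := by
  simp [patt]

/-- Embedding of a mixed product into the power of a sum. -/
noncomputable def emb (m i : ℕ) (S : Finset (Fin m))
    (p : (Fin i → V) × (Fin (m - i) → W)) : Fin m → V ⊕ W := fun j =>
  if h : j ∈ S then
    (if hc : S.card = i then Sum.inl (p.1 ((S.orderIsoOfFin hc).symm ⟨j, h⟩))
     else Sum.inl (Classical.arbitrary V))
  else
    (if hc : Sᶜ.card = m - i then
      Sum.inr (p.2 ((Sᶜ.orderIsoOfFin hc).symm ⟨j, Finset.mem_compl.2 h⟩))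
     else Sum.inr (Classical.arbitrary W))

lemma emb_isLeft {m i : ℕ} (S : Finset (Fin m)) (p : (Fin i → V) × (Fin (m - i) → W))
    (j : Fin m) : (emb m i S p j).isLeft ↔ j ∈ S := by
  by_cases h : j ∈ S
  · simp only [emb, dif_pos h]
    split <;> simp [h]
  · simp only [emb, dif_neg h]
    split <;> simp [h]

lemma patt_emb {m i : ℕ} (S : Finset (Fin m)) (p : (Fin i → V) × (Fin (m - i) → W)) :
    patt (emb m i S p) = S := by
  ext j
  rw [mem_patt, emb_isLeft]

lemma card_compl_of_card {m i : ℕ} {S : Finset (Fin m)} (hS : S.card = i) :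
    Sᶜ.card = m - i := by
  rw [Finset.card_compl, Fintype.card_fin, hS]

lemma emb_left {m i : ℕ} {S : Finset (Fin m)} (hS : S.card = i)
    (p : (Fin i → V) × (Fin (m - i) → W)) {j : Fin m} (h : j ∈ S) :
    emb m i S p j = Sum.inl (p.1 ((S.orderIsoOfFin hS).symm ⟨j, h⟩)) := by
  rw [emb, dif_pos h, dif_pos hS]

lemma emb_right {m i : ℕ} {S : Finset (Fin m)} (hS : S.card = i)
    (p : (Fin i → V) × (Fin (m - i) → W)) {j : Fin m} (h : j ∉ S) :
    emb m i S p j = Sum.inr (p.2 ((Sᶜ.orderIsoOfFin (card_compl_of_card hS)).symm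
      ⟨j, Finset.mem_compl.2 h⟩)) := by
  rw [emb, dif_neg h, dif_pos (card_compl_of_card hS)]

lemma emb_left_apply {m i : ℕ} {S : Finset (Fin m)} (hS : S.card = i)
    (p : (Fin i → V) × (Fin (m - i) → W)) (k : Fin i) :
    emb m i S p ((S.orderIsoOfFin hS k : Fin m)) = Sum.inl (p.1 k) := by
  have hmem : ((S.orderIsoOfFin hS k : Fin m)) ∈ S := (S.orderIsoOfFin hS k).2
  rw [emb_left hS p hmem]
  congr 1
  have : (⟨(S.orderIsoOfFin hS k : Fin m), hmem⟩ : {x // x ∈ S}) = S.orderIsoOfFin hS k :=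
    Subtype.ext rfl
  rw [this, OrderIso.symm_apply_apply]

lemma emb_right_apply {m i : ℕ} {S : Finset (Fin m)} (hS : S.card = i)
    (p : (Fin i → V) × (Fin (m - i) → W)) (k : Fin (m - i)) :
    emb m i S p ((Sᶜ.orderIsoOfFin (card_compl_of_card hS) k : Fin m)) = Sum.inr (p.2 k) := by
  have hmem : ((Sᶜ.orderIsoOfFin (card_compl_of_card hS) k : Fin m)) ∈ Sᶜ :=
    (Sᶜ.orderIsoOfFin (card_compl_of_card hS) k).2
  have hnot : ((Sᶜ.orderIsoOfFin (card_compl_of_card hS) k : Fin m)) ∉ S :=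
    Finset.mem_compl.1 hmem
  rw [emb_right hS p hnot]
  congr 1
  have : (⟨(Sᶜ.orderIsoOfFin (card_compl_of_card hS) k : Fin m), Finset.mem_compl.2 hnot⟩ :
      {x // x ∈ Sᶜ}) = Sᶜ.orderIsoOfFin (card_compl_of_card hS) k := Subtype.ext rfl
  rw [this, OrderIso.symm_apply_apply]

lemma emb_inj {m i : ℕ} {S : Finset (Fin m)} (hS : S.card = i) :
    Function.Injective (emb (V := V) (W := W) m i S) := by
  intro p p' h
  refine Prod.ext (funext fun k => ?_) (funext fun k => ?_)
  · have := congrFun h ((S.orderIsoOfFin hS k : Fin m))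
    rw [emb_left_apply hS p k, emb_left_apply hS p' k] at this
    exact Sum.inl_injective this
  · have := congrFun h ((Sᶜ.orderIsoOfFin (card_compl_of_card hS) k : Fin m))
    rw [emb_right_apply hS p k, emb_right_apply hS p' k] at this
    exact Sum.inr_injective this

lemma emb_rel_reflect {m i : ℕ} {S : Finset (Fin m)} (hS : S.card = i)
    {p p' : (Fin i → V) × (Fin (m - i) → W)}
    (h : piR (Fin m) (Sum.LiftRel r s) (emb m i S p) (emb m i S p')) :
    pRel (piR (Fin i) r) (piR (Fin (m - i)) s) p p' := by
  constructor
  · intro k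
    have hh := h ((S.orderIsoOfFin hS k : Fin m))
    rw [emb_left_apply hS p k, emb_left_apply hS p' k] at hh
    cases hh
    assumption
  · intro k
    have hh := h ((Sᶜ.orderIsoOfFin (card_compl_of_card hS) k : Fin m))
    rw [emb_right_apply hS p k, emb_right_apply hS p' k] at hh
    cases hh
    assumption

lemma emb_cross {m i : ℕ} {S S' : Finset (Fin m)} (hne : S ≠ S')
    (p p' : (Fin i → V) × (Fin (m - i) → W)) :
    ¬ piR (Fin m) (Sum.LiftRel r s) (emb m i S p) (emb m i S' p') := by
  intro h
  have hex : ∃ j, ¬ (j ∈ S ↔ j ∈ S') := by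
    by_contra hc
    push_neg at hc
    exact hne (Finset.ext fun j => (hc j))
  obtain ⟨j, hj⟩ := hex
  have hh := h j
  have hiff : j ∈ S ↔ j ∈ S' :=
    ((emb_isLeft S p j).symm.trans (Sum.LiftRel.isLeft_congr hh)).trans (emb_isLeft S' p' j)
  exact hj hiff

/-- C9': lower bound for the power of a disjoint sum. -/
lemma choose_mul_aR_le (m i : ℕ) :
    m.choose i * aR (pRel (piR (Fin i) r) (piR (Fin (m - i)) s))
      ≤ aR (piR (Fin m) (Sum.LiftRel r s)) := by
  classical
  obtain ⟨t, ht, htc⟩ := exists_aR (pRel (piR (Fin i) r) (piR (Fin (m - i)) s))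
  rw [← htc]
  have hcard : ((Finset.powersetCard i (Finset.univ : Finset (Fin m))) ×ˢ t).card
      = m.choose i * t.card := by
    rw [Finset.card_product, Finset.card_powersetCard, Finset.card_univ, Fintype.card_fin]
  rw [← hcard]
  set B := ((Finset.powersetCard i (Finset.univ : Finset (Fin m))) ×ˢ t).image
    (fun z => emb m i z.1 z.2) with hB
  have hinj : Set.InjOn (fun z : Finset (Fin m) × ((Fin i → V) × (Fin (m - i) → W)) =>
      emb m i z.1 z.2)
      (((Finset.powersetCard i (Finset.univ : Finset (Fin m))) ×ˢ t : Finset _) : Set _) := by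
    rintro ⟨S, p⟩ hSp ⟨S', p'⟩ hSp' he
    rw [Finset.mem_coe, Finset.mem_product, Finset.mem_powersetCard] at hSp hSp'
    have hSS : S = S' := by
      rw [← patt_emb S p, ← patt_emb S' p']
      exact congrArg patt he
    subst hSS
    have : p = p' := emb_inj hSp.1.2 he
    rw [this]
  have hcard2 : B.card = ((Finset.powersetCard i (Finset.univ : Finset (Fin m))) ×ˢ t).card :=
    Finset.card_image_of_injOn hinj
  rw [← hcard2]
  refine card_le_aR ?_
  intro a ha b hb hab hrel
  rw [hB, Finset.mem_image] at ha hb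
  obtain ⟨⟨S, p⟩, hSp, rfl⟩ := ha
  obtain ⟨⟨S', p'⟩, hSp', rfl⟩ := hb
  rw [Finset.mem_product, Finset.mem_powersetCard] at hSp hSp'
  by_cases hSS : S = S'
  · subst hSS
    have hpp : p ≠ p' := fun he => hab (by rw [he])
    exact ht p hSp.2 p' hSp'.2 hpp (emb_rel_reflect r s hSp.1.2 hrel)
  · exact emb_cross r s hSS p p' hrel

/-- C10: upper bound for the power of a disjoint sum. -/
lemma aR_sum_le_sum (m : ℕ) :
    aR (piR (Fin m) (Sum.LiftRel r s))
      ≤ ∑ S ∈ (Finset.univ : Finset (Fin m)).powerset,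
          aR (pRel (piR (Fin S.card) r) (piR (Fin (m - S.card)) s)) := by
  classical
  obtain ⟨B, hB, hBc⟩ := exists_aR (piR (Fin m) (Sum.LiftRel r s))
  rw [← hBc]
  rw [Finset.card_eq_sum_card_fiberwise (f := patt)
    (t := (Finset.univ : Finset (Fin m)).powerset)
    (fun a _ => Finset.mem_powerset.2 (Finset.filter_subset _ _))]
  refine Finset.sum_le_sum fun S hS => ?_
  -- the "down" map
  set ψ : (Fin m → V ⊕ W) → (Fin S.card → V) × (Fin (m - S.card) → W) := fun f =>
    (fun k => Sum.elim id (fun _ => Classical.arbitrary V) (f ((S.orderIsoOfFin rfl k : Fin m))),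
     fun k => Sum.elim (fun _ => Classical.arbitrary W) id
       (f ((Sᶜ.orderIsoOfFin (card_compl_of_card rfl) k : Fin m)))) with hψ
  -- values on the fiber
  have hval : ∀ f ∈ B.filter (fun a => patt a = S), ∀ j : Fin m,
      (j ∈ S → f j = Sum.inl (Sum.elim id (fun _ => Classical.arbitrary V) (f j))) ∧
      (j ∉ S → f j = Sum.inr (Sum.elim (fun _ => Classical.arbitrary W) id (f j))) := by
    intro f hf j
    rw [Finset.mem_filter] at hf
    have hp := hf.2
    constructor
    · intro hjS
      have : (f j).isLeft := by rw [← mem_patt, hp]; exact hjS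
      cases hfj : f j with
      | inl v => simp
      | inr w => rw [hfj] at this; exact Bool.noConfusion this
    · intro hjS
      have : ¬ (f j).isLeft := by rw [← mem_patt, hp]; exact hjS
      cases hfj : f j with
      | inl v => rw [hfj] at this; exact absurd rfl this
      | inr w => simp
  have hinj : Set.InjOn ψ (B.filter (fun a => patt a = S)) := by
    intro f hf g hg he
    have hf' := hval f hf
    have hg' := hval g hg
    funext j
    by_cases hj : j ∈ S
    · set k := (S.orderIsoOfFin rfl).symm ⟨j, hj⟩ with hk
      have hjk : (S.orderIsoOfFin rfl k : Fin m) = j := by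
        rw [hk, OrderIso.apply_symm_apply]
      have h1 := congrFun (congrArg Prod.fst he) k
      simp only [hψ] at h1
      rw [hjk] at h1
      rw [(hf' j).1 hj, (hg' j).1 hj, h1]
    · have hj' : j ∈ Sᶜ := Finset.mem_compl.2 hj
      set k := (Sᶜ.orderIsoOfFin (card_compl_of_card rfl)).symm ⟨j, hj'⟩ with hk
      have hjk : (Sᶜ.orderIsoOfFin (card_compl_of_card rfl) k : Fin m) = j := by
        rw [hk, OrderIso.apply_symm_apply]
      have h1 := congrFun (congrArg Prod.snd he) k
      simp only [hψ] at h1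
      rw [hjk] at h1
      rw [(hf' j).2 hj, (hg' j).2 hj, h1]
  rw [← Finset.card_image_of_injOn hinj]
  refine card_le_aR ?_
  intro a' ha' b' hb' hab' hrel
  rw [Finset.mem_image] at ha' hb'
  obtain ⟨f, hf, rfl⟩ := ha'
  obtain ⟨g, hg, rfl⟩ := hb'
  have hfg : f ≠ g := fun he => hab' (by rw [he])
  have hfB : f ∈ B := (Finset.mem_filter.1 hf).1
  have hgB : g ∈ B := (Finset.mem_filter.1 hg).1
  refine hB f hfB g hgB hfg ?_
  -- reconstruct the relation
  intro j
  by_cases hj : j ∈ S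
  · set k := (S.orderIsoOfFin rfl).symm ⟨j, hj⟩ with hk
    have hjk : (S.orderIsoOfFin rfl k : Fin m) = j := by
      rw [hk, OrderIso.apply_symm_apply]
    have h1 := hrel.1 k
    simp only [hψ] at h1
    rw [hjk] at h1
    rw [(hval f hf j).1 hj, (hval g hg j).1 hj]
    exact Sum.LiftRel.inl h1
  · have hj' : j ∈ Sᶜ := Finset.mem_compl.2 hj
    set k := (Sᶜ.orderIsoOfFin (card_compl_of_card rfl)).symm ⟨j, hj'⟩ with hk
    have hjk : (Sᶜ.orderIsoOfFin (card_compl_of_card rfl) k : Fin m) = j := by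
      rw [hk, OrderIso.apply_symm_apply]
    have h1 := hrel.2 k
    simp only [hψ] at h1
    rw [hjk] at h1
    rw [(hval f hf j).2 hj, (hval g hg j).2 hj]
    exact Sum.LiftRel.inr h1

end PatternLemmas



section MainLemmas

open Finset

/-- Arithmetic: if `t^m ≤ (m+1) c^m` for all `m ≥ 1` then `t ≤ c`. -/
lemma le_of_pow_le_linear_mul {t c : ℝ} (ht : 0 ≤ t) (hc : 1 ≤ c)
    (h : ∀ m : ℕ, 1 ≤ m → t ^ m ≤ (m + 1) * c ^ m) : t ≤ c := by
  by_contra hlt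
  push_neg at hlt
  have hc0 : (0:ℝ) < c := by linarith
  set δ : ℝ := t / c - 1 with hδ
  have hδpos : 0 < δ := by
    have : 1 < t / c := (one_lt_div hc0).2 hlt
    simp [hδ]; linarith
  have hb : ∀ m : ℕ, 1 ≤ m → (1 + δ) ^ m ≤ m + 1 := by
    intro m hm
    have hcm : (0:ℝ) < c ^ m := pow_pos hc0 m
    have h1 : (1 + δ) ^ m = t ^ m / c ^ m := by
      rw [hδ]
      rw [show (1 : ℝ) + (t / c - 1) = t / c by ring, div_pow]
    rw [h1, div_le_iff₀ hcm]
    exact h m hm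
  set n : ℕ := max 2 (Nat.ceil ((3:ℝ) / δ ^ 2)) with hn
  have hn2 : 2 ≤ n := le_max_left _ _
  have hnδ : (3:ℝ) / δ ^ 2 ≤ n := by
    calc (3:ℝ) / δ ^ 2 ≤ (Nat.ceil ((3:ℝ) / δ ^ 2) : ℝ) := Nat.le_ceil _
    _ ≤ n := by exact_mod_cast Nat.cast_le.2 (le_max_right _ _)
  have hnδ2 : 3 ≤ (n:ℝ) * δ ^ 2 := by
    rw [div_le_iff₀ (by positivity : (0:ℝ) < δ ^ 2)] at hnδ
    linarith
  have hbern : 1 + (n:ℝ) * δ ≤ (1 + δ) ^ n := one_add_mul_le_pow (by linarith) n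
  have hsq : ((1 + δ) ^ n) ^ 2 ≤ 2 * (n:ℝ) + 1 := by
    have h2n := hb (2 * n) (by omega)
    have he : ((1+δ)^n)^2 = (1+δ)^(2*n) := by rw [← pow_mul, Nat.mul_comm]
    rw [he]
    push_cast at h2n
    linarith
  have h2 : ((n:ℝ) * δ) ^ 2 ≤ ((1 + δ) ^ n) ^ 2 := by
    apply pow_le_pow_left₀ (by positivity)
    nlinarith [hbern]
  have h3 : ((n:ℝ) * δ) ^ 2 = (n:ℝ) * ((n:ℝ) * δ ^ 2) := by ring
  have hn1 : (2:ℝ) ≤ (n:ℝ) := by exact_mod_cast hn2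
  nlinarith [h2, hsq, h3, hnδ2, hn1]

/-- Max-term bound for the binomial expansion. -/
lemma exists_max_binomial (x y : ℝ) (hx : 0 ≤ x) (hy : 0 ≤ y) (m : ℕ) :
    ∃ i ≤ m, (x + y) ^ m ≤ (m + 1) * ((m.choose i : ℝ) * (x ^ i * y ^ (m - i))) := by
  have hexp : (x + y) ^ m = ∑ i ∈ range (m + 1), x ^ i * y ^ (m - i) * (m.choose i : ℝ) :=
    add_pow x y m
  have hsum : ∑ _i ∈ range (m + 1), (x + y) ^ m / (m + 1) ≤
      ∑ i ∈ range (m + 1), x ^ i * y ^ (m - i) * (m.choose i : ℝ) := by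
    rw [Finset.sum_const, Finset.card_range, ← hexp, nsmul_eq_mul]
    apply le_of_eq
    have hm1 : ((m:ℝ)+1) ≠ 0 := by positivity
    push_cast
    field_simp
  obtain ⟨i, hi, hle⟩ := Finset.exists_le_of_sum_le (by simp : (range (m+1)).Nonempty) hsum
  rw [Finset.mem_range] at hi
  refine ⟨i, by omega, ?_⟩
  rw [div_le_iff₀ (by positivity : (0:ℝ) < (m:ℝ) + 1)] at hle
  calc (x + y) ^ m ≤ x ^ i * y ^ (m - i) * (m.choose i : ℝ) * ((m:ℝ) + 1) := hle
  _ = ((m:ℝ) + 1) * ((m.choose i : ℝ) * (x ^ i * y ^ (m - i))) := by ring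

/-- Vandermonde-type power inequality. -/
lemma choose_pow_le_choose_mul (m i n : ℕ) (him : i ≤ m) :
    m.choose i ^ n ≤ (m * n).choose (i * n) := by
  induction n with
  | zero => simp
  | succ n ih =>
      have hv : (m * n).choose (i * n) * m.choose i ≤ (m * n + m).choose (i * n + i) := by
        rw [Nat.add_choose_eq]
        exact Finset.single_le_sum (f := fun ij : ℕ × ℕ => (m*n).choose ij.1 * m.choose ij.2)
          (fun _ _ => Nat.zero_le _)
          (Finset.HasAntidiagonal.mem_antidiagonal.2 (rfl : (i * n, i).1 + (i * n, i).2 = i * n + i))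
      calc m.choose i ^ (n + 1) = m.choose i ^ n * m.choose i := by ring
      _ ≤ (m * n).choose (i * n) * m.choose i := Nat.mul_le_mul_right _ ih
      _ ≤ (m * n + m).choose (i * n + i) := hv
      _ = (m * (n+1)).choose (i * (n+1)) := by rw [Nat.mul_succ, Nat.mul_succ]

variable {V W : Type*} [Fintype V] [Fintype W] [Nonempty V] [Nonempty W]
variable (r : V → V → Prop) (s : W → W → Prop)

/-- The key superadditivity ingredient. -/
lemma choose_mul_phi_le (m i : ℕ) (hm : 1 ≤ m) (him : i ≤ m) :
    (m.choose i : ℝ) * Phi r s i (m - i) ≤ cRR (Sum.LiftRel r s) ^ m := by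
  set c := cRR (Sum.LiftRel r s) with hc
  have hc1 : 1 ≤ c := one_le_cRR _
  have hC1 : 1 ≤ (m.choose i : ℝ) := by exact_mod_cast Nat.choose_pos him
  have hCpos : (0:ℝ) < (m.choose i : ℝ) := by linarith
  have hkey : ∀ n : ℕ, 1 ≤ n → dseq r s i (m - i) n ≤ (c ^ m / (m.choose i : ℝ)) ^ n := by
    intro n hn
    have h1 : (m.choose i) ^ n * aR (pRel (piR (Fin (i * n)) r) (piR (Fin ((m - i) * n)) s))
        ≤ aR (piR (Fin (m * n)) (Sum.LiftRel r s)) := by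
      calc (m.choose i) ^ n * aR (pRel (piR (Fin (i*n)) r) (piR (Fin ((m-i)*n)) s))
          ≤ (m*n).choose (i*n) * aR (pRel (piR (Fin (i*n)) r) (piR (Fin ((m-i)*n)) s)) :=
            Nat.mul_le_mul_right _ (choose_pow_le_choose_mul m i n him)
      _ ≤ aR (piR (Fin (m * n)) (Sum.LiftRel r s)) := by
            have := choose_mul_aR_le r s (m * n) (i * n)
            rwa [show m * n - i * n = (m - i) * n by rw [Nat.sub_mul]] at this
    have h2 : (aR (piR (Fin (m * n)) (Sum.LiftRel r s)) : ℝ) ≤ (c ^ m) ^ n := by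
      have h3 := (goodSeq_useq (Sum.LiftRel r s)).upow_le_nsup (m * n)
        (Nat.one_le_iff_ne_zero.2 (Nat.mul_ne_zero (by omega) (by omega)))
      rw [← pow_mul]
      exact h3
    have h4 : ((m.choose i : ℝ)) ^ n * dseq r s i (m - i) n ≤ (c ^ m) ^ n := by
      unfold dseq
      calc ((m.choose i : ℝ)) ^ n * (aR (pRel (piR (Fin (i*n)) r) (piR (Fin ((m-i)*n)) s)) : ℝ)
          = ((m.choose i ^ n * aR (pRel (piR (Fin (i*n)) r) (piR (Fin ((m-i)*n)) s)) : ℕ) : ℝ) := by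
            push_cast; ring
      _ ≤ (aR (piR (Fin (m * n)) (Sum.LiftRel r s)) : ℝ) := by exact_mod_cast h1
      _ ≤ (c ^ m) ^ n := h2
    rw [div_pow]
    rw [le_div_iff₀ (by positivity)]
    calc dseq r s i (m-i) n * (m.choose i : ℝ) ^ n
        = ((m.choose i : ℝ)) ^ n * dseq r s i (m - i) n := by ring
    _ ≤ (c ^ m) ^ n := h4
  have hphile : Phi r s i (m - i) ≤ c ^ m / (m.choose i : ℝ) := by
    refine (goodSeq_dseq r s i (m - i)).nsup_le ?_ hkey
    positivity
  calc (m.choose i : ℝ) * Phi r s i (m - i) ≤ (m.choose i : ℝ) * (c ^ m / (m.choose i : ℝ)) :=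
        mul_le_mul_of_nonneg_left hphile (by positivity)
  _ = c ^ m := by field_simp

/-- Superadditivity of capacity over disjoint sums. -/
lemma cRR_sum_ge : cRR r + cRR s ≤ cRR (Sum.LiftRel r s) := by
  set x := cRR r with hx
  set y := cRR s with hy
  set c := cRR (Sum.LiftRel r s) with hc
  have hx1 : 1 ≤ x := one_le_cRR _
  have hy1 : 1 ≤ y := one_le_cRR _
  have hc1 : 1 ≤ c := one_le_cRR _
  refine le_of_pow_le_linear_mul (by linarith) hc1 fun m hm => ?_
  obtain ⟨i, him, hmax⟩ := exists_max_binomial x y (by linarith) (by linarith) m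
  calc (x + y) ^ m ≤ (m + 1) * ((m.choose i : ℝ) * (x ^ i * y ^ (m - i))) := hmax
  _ ≤ (m + 1) * ((m.choose i : ℝ) * Phi r s i (m - i)) := by
      refine mul_le_mul_of_nonneg_left (mul_le_mul_of_nonneg_left ?_ (by positivity)) (by positivity)
      exact phi_lower r s i (m - i)
  _ ≤ (m + 1) * c ^ m := by
      refine mul_le_mul_of_nonneg_left ?_ (by positivity)
      exact choose_mul_phi_le r s m i hm him

end MainLemmas



section Directions

open Finset

variable {V W : Type*} [Fintype V] [Fintype W] [Nonempty V] [Nonempty W]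
variable (r : V → V → Prop) (s : W → W → Prop)

lemma phi_upper (hm : cRR (pRel r s) = cRR r * cRR s) (a b : ℕ) :
    Phi r s a b ≤ cRR r ^ a * cRR s ^ b := by
  set x := cRR r with hx
  set y := cRR s with hy
  have hx1 : 1 ≤ x := one_le_cRR _
  have hy1 : 1 ≤ y := one_le_cRR _
  rcases Nat.eq_zero_or_pos a with rfl | ha
  · rcases Nat.eq_zero_or_pos b with rfl | hb
    · rw [phi_zero_zero]; norm_num
    · rw [phi_zero_b r s b hb, pow_zero, one_mul]
  · rcases Nat.eq_zero_or_pos b with rfl | hb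
    · rw [phi_a_zero r s a ha, pow_zero, mul_one]
    · have hab1 : 1 ≤ a + b := by omega
      have h1 : Phi r s a b * Phi r s b a ≤ Phi r s (a + b) (b + a) := phi_mul r s a b b a
      have h2 : Phi r s (a + b) (b + a) = (x * y) ^ (a + b) := by
        rw [show b + a = a + b by ring, phi_diag r s (a+b) hab1, hm]
      have h3 : x ^ b * y ^ a ≤ Phi r s b a := phi_lower r s b a
      have hpos : (0:ℝ) < x ^ b * y ^ a := by positivity
      have h4 : Phi r s a b * (x ^ b * y ^ a) ≤ (x * y) ^ (a + b) := by
        calc Phi r s a b * (x ^ b * y ^ a) ≤ Phi r s a b * Phi r s b a := by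
              refine mul_le_mul_of_nonneg_left h3 ?_
              have := one_le_phi r s a b; linarith
        _ ≤ (x * y) ^ (a + b) := h2 ▸ h1
      have h5 : (x * y) ^ (a + b) = (x ^ a * y ^ b) * (x ^ b * y ^ a) := by
        rw [mul_pow, pow_add, pow_add]; ring
      rw [h5] at h4
      exact le_of_mul_le_mul_right h4 hpos

lemma sum_powerset_pow (x y : ℝ) (m : ℕ) :
    ∑ S ∈ (Finset.univ : Finset (Fin m)).powerset, x ^ S.card * y ^ (m - S.card)
      = (x + y) ^ m := by
  have h := Finset.prod_add (fun _ : Fin m => x) (fun _ : Fin m => y) Finset.univ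
  rw [Finset.prod_const, Finset.card_univ, Fintype.card_fin] at h
  rw [h]
  refine Finset.sum_congr rfl fun t ht => ?_
  rw [Finset.prod_const, Finset.prod_const, Finset.card_sdiff_of_subset (Finset.subset_univ t),
    Finset.card_univ, Fintype.card_fin]

lemma cRR_sum_le (hm : cRR (pRel r s) = cRR r * cRR s) :
    cRR (Sum.LiftRel r s) ≤ cRR r + cRR s := by
  set x := cRR r with hx
  set y := cRR s with hy
  have hx1 : 1 ≤ x := one_le_cRR _
  have hy1 : 1 ≤ y := one_le_cRR _
  refine (goodSeq_useq (Sum.LiftRel r s)).nsup_le (by linarith) fun n hn => ?_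
  have h1 : (aR (piR (Fin n) (Sum.LiftRel r s)) : ℝ)
      ≤ ∑ S ∈ (Finset.univ : Finset (Fin n)).powerset,
          (aR (pRel (piR (Fin S.card) r) (piR (Fin (n - S.card)) s)) : ℝ) := by
    exact_mod_cast Nat.cast_le.2 (aR_sum_le_sum r s n)
  calc useq (Sum.LiftRel r s) n
      ≤ ∑ S ∈ (Finset.univ : Finset (Fin n)).powerset,
          (aR (pRel (piR (Fin S.card) r) (piR (Fin (n - S.card)) s)) : ℝ) := h1
  _ ≤ ∑ S ∈ (Finset.univ : Finset (Fin n)).powerset, x ^ S.card * y ^ (n - S.card) := by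
      refine Finset.sum_le_sum fun S hS => ?_
      exact (phi_term r s S.card (n - S.card)).trans (phi_upper r s hm S.card (n - S.card))
  _ = (x + y) ^ n := sum_powerset_pow x y n

/-- The distribution equivalence for squares of sums. -/
def sqDistrib (V W : Type*) : (V ⊕ W) × (V ⊕ W) ≃ ((V × V) ⊕ (V × W)) ⊕ ((W × V) ⊕ (W × W)) :=
  (Equiv.sumProdDistrib V W (V ⊕ W)).trans
    (Equiv.sumCongr (Equiv.prodSumDistrib V V W) (Equiv.prodSumDistrib W V W))

lemma cRR_prod_le_of_sum_eq (ha : cRR (Sum.LiftRel r s) = cRR r + cRR s) :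
    cRR (pRel r s) ≤ cRR r * cRR s := by
  classical
  set x := cRR r with hx
  set y := cRR s with hy
  set q := Sum.LiftRel r s with hq
  have hx1 : 1 ≤ x := one_le_cRR _
  have hy1 : 1 ≤ y := one_le_cRR _
  -- step 1 : cRR (pRel q q) ≤ (x + y) ^ 2
  have h1 : cRR (pRel q q) ≤ (x + y) ^ 2 := by
    have := cRR_pRel_self_le_sq q
    rwa [ha] at this
  -- step 2 : transport along the distribution equivalence
  have h2 : cRR (pRel q q) =
      cRR (Sum.LiftRel (Sum.LiftRel (pRel r r) (pRel r s))
        (Sum.LiftRel (pRel s r) (pRel s s))) := by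
    refine cRR_iso (sqDistrib V W) fun a b => ?_
    rcases a with ⟨a1 | a1, a2 | a2⟩ <;> rcases b with ⟨b1 | b1, b2 | b2⟩ <;>
      simp [hq, sqDistrib, pRel, Sum.liftRel_inl_inl, Sum.liftRel_inr_inr,
        Sum.not_liftRel_inl_inr, Sum.not_liftRel_inr_inl]
  -- step 3 : superadditivity on the four parts
  have h3 : cRR (pRel r r) + cRR (pRel r s) + (cRR (pRel s r) + cRR (pRel s s))
      ≤ cRR (Sum.LiftRel (Sum.LiftRel (pRel r r) (pRel r s))
        (Sum.LiftRel (pRel s r) (pRel s s))) := by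
    calc cRR (pRel r r) + cRR (pRel r s) + (cRR (pRel s r) + cRR (pRel s s))
        ≤ cRR (Sum.LiftRel (pRel r r) (pRel r s)) + cRR (Sum.LiftRel (pRel s r) (pRel s s)) :=
          add_le_add (cRR_sum_ge _ _) (cRR_sum_ge _ _)
    _ ≤ _ := cRR_sum_ge _ _
  -- step 4 : lower bounds for the diagonal parts and symmetry for the cross part
  have h4 : x ^ 2 ≤ cRR (pRel r r) := by
    have := cRR_mul_le r r
    rwa [← pow_two] at this
  have h5 : y ^ 2 ≤ cRR (pRel s s) := by
    have := cRR_mul_le s s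
    rwa [← pow_two] at this
  have h6 : cRR (pRel s r) = cRR (pRel r s) := by
    refine cRR_iso (Equiv.prodComm W V) fun a b => ?_
    simp [pRel, and_comm]
  have hcomb : x ^ 2 + cRR (pRel r s) + (cRR (pRel r s) + y ^ 2) ≤ (x + y) ^ 2 := by
    calc x ^ 2 + cRR (pRel r s) + (cRR (pRel r s) + y ^ 2)
        ≤ cRR (pRel r r) + cRR (pRel r s) + (cRR (pRel s r) + cRR (pRel s s)) := by
          rw [h6]
          exact add_le_add (add_le_add h4 le_rfl) (add_le_add le_rfl h5)
    _ ≤ _ := h3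
    _ = cRR (pRel q q) := h2.symm
    _ ≤ (x + y) ^ 2 := h1
  nlinarith [hcomb]

end Directions

section Bridges

variable {V W : Type*} [Fintype V] [Fintype W]

/-- The confusability relation of a graph. -/
def cRel (G : SimpleGraph V) : V → V → Prop := fun a b => a = b ∨ G.Adj a b

lemma indepNum_eq_aR (G : SimpleGraph V) : indepNum G = aR G.Adj := rfl

lemma indepNum_strongPow (G : SimpleGraph V) (k : ℕ) :
    indepNum (strongPow G k) = aR (piR (Fin k) (cRel G)) := by
  rw [indepNum_eq_aR]
  refine aR_congr fun a b hab => ?_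
  unfold strongPow
  rw [SimpleGraph.fromRel_adj]
  constructor
  · rintro ⟨-, h | h⟩
    · exact h
    · intro i
      rcases h i with he | hadj
      · exact Or.inl he.symm
      · exact Or.inr (G.adj_symm hadj)
  · intro h
    exact ⟨hab, Or.inl h⟩

lemma shannon_eq_cRR (G : SimpleGraph V) : shannonCapacity G = cRR (cRel G) := by
  unfold shannonCapacity cRR nsup
  congr 1
  funext k
  rw [show useq (cRel G) (k+1) = ((indepNum (strongPow G (k+1)) : ℕ) : ℝ) by
    unfold useq; rw [indepNum_strongPow]]

lemma crel_strongProd (G : SimpleGraph V) (H : SimpleGraph W) (x y : V × W) :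
    cRel (strongProd G H) x y ↔ pRel (cRel G) (cRel H) x y := by
  unfold cRel strongProd pRel
  rw [SimpleGraph.fromRel_adj]
  constructor
  · rintro (rfl | ⟨hne, h | h⟩)
    · exact ⟨Or.inl rfl, Or.inl rfl⟩
    · exact h
    · refine ⟨?_, ?_⟩
      · rcases h.1 with he | ha
        · exact Or.inl he.symm
        · exact Or.inr (G.adj_symm ha)
      · rcases h.2 with he | ha
        · exact Or.inl he.symm
        · exact Or.inr (H.adj_symm ha)
  · rintro ⟨h1, h2⟩
    by_cases hxy : x = y
    · exact Or.inl hxy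
    · exact Or.inr ⟨hxy, Or.inl ⟨h1, h2⟩⟩

lemma crel_sum (G : SimpleGraph V) (H : SimpleGraph W) (x y : V ⊕ W) :
    cRel (G ⊕g H) x y ↔ Sum.LiftRel (cRel G) (cRel H) x y := by
  rcases x with a | a <;> rcases y with b | b <;>
    simp [cRel, SimpleGraph.sum, Sum.liftRel_inl_inl, Sum.liftRel_inr_inr,
      Sum.not_liftRel_inl_inr, Sum.not_liftRel_inr_inl]

lemma shannon_empty [IsEmpty V] (G : SimpleGraph V) : shannonCapacity G = 0 := by
  unfold shannonCapacity
  have h0 : ∀ k : ℕ, indepNum (strongPow G (k + 1)) = 0 := by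
    intro k
    rw [indepNum_eq_aR]
    refine Nat.le_zero.1 (aR_le fun t _ => ?_)
    have h := t.card_le_univ
    have h2 : Fintype.card (Fin (k+1) → V) = 0 := by
      rw [Fintype.card_eq_zero_iff]
      exact ⟨fun f => IsEmpty.elim ‹IsEmpty V› (f 0)⟩
    rwa [h2] at h
  have h1 : ∀ k : ℕ, ((indepNum (strongPow G (k + 1)) : ℕ) : ℝ) ^ ((1:ℝ)/(k+1)) = 0 := by
    intro k
    rw [h0 k]
    push_cast
    rw [Real.zero_rpow (by positivity)]
  simp only [h1, ciSup_const]

end Bridges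




theorem capacity_sum_additive_iff_product_multiplicative
    {V W : Type*} [Fintype V] [Fintype W] (G : SimpleGraph V) (H : SimpleGraph W) :
    shannonCapacity (G ⊕g H) = shannonCapacity G + shannonCapacity H ↔
      shannonCapacity (strongProd G H) = shannonCapacity G * shannonCapacity H := by

  rcases isEmpty_or_nonempty V with hV | hV
  · have hG : shannonCapacity G = 0 := shannon_empty G
    have hProd : shannonCapacity (strongProd G H) = 0 := shannon_empty _
    have hSum : shannonCapacity (G ⊕g H) = shannonCapacity H := by
      rw [shannon_eq_cRR, shannon_eq_cRR]
      refine cRR_iso (Equiv.emptySum V W) fun a b => ?_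
      rcases a with a | a
      · exact (IsEmpty.false a).elim
      · rcases b with b | b
        · exact (IsEmpty.false b).elim
        · rw [crel_sum, Equiv.emptySum_apply_inr, Equiv.emptySum_apply_inr]
          exact Sum.liftRel_inr_inr
    rw [hG, hProd, hSum]
    simp
  rcases isEmpty_or_nonempty W with hW | hW
  · have hH : shannonCapacity H = 0 := shannon_empty H
    have hProd : shannonCapacity (strongProd G H) = 0 := by
      have : IsEmpty (V × W) := ⟨fun p => IsEmpty.false p.2⟩
      exact shannon_empty _
    have hSum : shannonCapacity (G ⊕g H) = shannonCapacity G := by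
      rw [shannon_eq_cRR, shannon_eq_cRR]
      refine cRR_iso (Equiv.sumEmpty V W) fun a b => ?_
      rcases a with a | a
      · rcases b with b | b
        · rw [crel_sum, Equiv.sumEmpty_apply_inl, Equiv.sumEmpty_apply_inl]
          exact Sum.liftRel_inl_inl
        · exact (IsEmpty.false b).elim
      · exact (IsEmpty.false a).elim
    rw [hH, hProd, hSum]
    simp
  · have e1 : shannonCapacity (G ⊕g H) = cRR (Sum.LiftRel (cRel G) (cRel H)) := by
      rw [shannon_eq_cRR]
      exact cRR_iso (Equiv.refl _) fun a b => by
        rw [Equiv.refl_apply, Equiv.refl_apply]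
        exact crel_sum G H a b
    have e2 : shannonCapacity (strongProd G H) = cRR (pRel (cRel G) (cRel H)) := by
      rw [shannon_eq_cRR]
      exact cRR_iso (Equiv.refl _) fun a b => by
        rw [Equiv.refl_apply, Equiv.refl_apply]
        exact crel_strongProd G H a b
    rw [e1, e2, shannon_eq_cRR G, shannon_eq_cRR H]
    constructor
    · intro hadd
      exact le_antisymm (cRR_prod_le_of_sum_eq _ _ hadd) (cRR_mul_le _ _)
    · intro hmul
      exact le_antisymm (cRR_sum_le _ _ hmul) (cRR_sum_ge _ _)

end Paper
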